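/- For every n×n matrix M over a commutative ring R, the determinant of I + M equals the sum of the determinants of all principal submatrices of M; that is, det(1 + M) = ∑_{S ⊆ Fin n} det(M_S), where the sum ranges over all 2^n subsets S (including the empty set, whose principal minor is 1) and M_S denotes the principal submatrix of M with rows and columns indexed by S (in increasing order). -/

import Mathlib

/-- For every `n × n` matrix `M` over a commutative ring, `det (1 + M)` equals the sum of the
determinants of all principal submatrices of `M`, over all subsets `S` of `Fin n`. -/
theorem det_one_add_eq_sum_principal_minors {R : Type*} [CommRing R] {n : ℕ}
    (M : Matrix (Fin n) (Fin n) R) :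
    (1 + M).det =
      ∑ S : Finset (Fin n),
        (M.submatrix (S.orderEmbOfFin rfl) (S.orderEmbOfFin rfl)).det := by
  have key := (Matrix.detRowAlternating :
      (Fin n → R) [⋀^Fin n]→ₗ[R] R).toMultilinearMap.map_add_univ M
      (1 : Matrix (Fin n) (Fin n) R)
  have h1 : (1 + M).det =
      (Matrix.detRowAlternating :
        (Fin n → R) [⋀^Fin n]→ₗ[R] R).toMultilinearMap
        (M + (1 : Matrix (Fin n) (Fin n) R)) := by
    rw [add_comm]; rfl
  rw [h1]; refine key.trans ?_
  refine Finset.sum_congr rfl fun S _ => ?_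
  have hN : Matrix.detRowAlternating (S.piecewise M (1 : Matrix (Fin n) (Fin n) R)) =
      Matrix.det (Matrix.of (S.piecewise M (1 : Matrix (Fin n) (Fin n) R))) := rfl
  refine hN.trans ?_
  rw [← Matrix.det_submatrix_equiv_self (Equiv.sumCompl (fun x => x ∈ S))
    (Matrix.of (S.piecewise M (1 : Matrix (Fin n) (Fin n) R)))]
  have hblock : (Matrix.of (S.piecewise M (1 : Matrix (Fin n) (Fin n) R))).submatrix
      (Equiv.sumCompl (fun x => x ∈ S)) (Equiv.sumCompl (fun x => x ∈ S)) =
      Matrix.fromBlocks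
        (Matrix.of fun i j : {x : Fin n // x ∈ S} => M i.1 j.1)
        (Matrix.of fun (i : {x : Fin n // x ∈ S}) (j : {x : Fin n // x ∉ S}) => M i.1 j.1)
        0 1 := by
    ext i j
    cases i with
    | inl i =>
      cases j with
      | inl j => simp [Finset.piecewise, i.2]
      | inr j => simp [Finset.piecewise, i.2]
    | inr i =>
      cases j with
      | inl j =>
        have : i.1 ≠ j.1 := fun h => i.2 (h ▸ j.2)
        simp [Finset.piecewise, i.2, Matrix.one_apply_ne this]
      | inr j =>
        simp only [Matrix.submatrix_apply, Equiv.sumCompl_apply_inr, Matrix.of_apply,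
          Finset.piecewise, if_neg i.2, Matrix.fromBlocks_apply₂₂]
        by_cases h : i = j
        · subst h; simp [Matrix.one_apply_eq]
        · rw [Matrix.one_apply_ne (fun hh => h (Subtype.ext hh)), Matrix.one_apply_ne h]
  rw [hblock, Matrix.det_fromBlocks_zero₂₁, Matrix.det_one, mul_one]
  rw [← Matrix.det_submatrix_equiv_self (S.orderIsoOfFin rfl).toEquiv]
  congr 1
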